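/- Let r ∈ (−1,1) and let (Z₁, Z₂) be bivariate standard Gaussian with correlation r. Then for all u, v ∈ ℝ, Cov(1{Z₁ > u}, 1{Z₂ > v}) = (1/(2π)) ∫_0^r (1 − s²)^{−1/2} exp( −(u² − 2suv + v²)/(2(1 − s²)) ) ds, where for r < 0 the integral is understood as the oriented integral (equal to minus the integral over [r,0]). -/

import Mathlib

open MeasureTheory ProbabilityTheory Set Filter Topology

noncomputable section

/-- the bivariate standard Gaussian density with correlation `r` -/
def bivGaussDensity (r x y : ℝ) : ℝ :=
  (2 * Real.pi * Real.sqrt (1 - r ^ 2))⁻¹ *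
    Real.exp (-(x ^ 2 - 2 * r * x * y + y ^ 2) / (2 * (1 - r ^ 2)))

/-- `(U, V)` is a bivariate standard Gaussian pair with correlation `r`. -/
def IsBivStdGaussian {Ω : Type*} [MeasurableSpace Ω] (P : Measure Ω)
    (U V : Ω → ℝ) (r : ℝ) : Prop :=
  Measure.map (fun ω => (U ω, V ω)) P =
    (volume : Measure (ℝ × ℝ)).withDensity fun p => ENNReal.ofReal (bivGaussDensity r p.1 p.2)

/-- `Cov(1{X > u}, 1{Y > v})` for two real random variables. -/
def covInd {Ω : Type*} [MeasurableSpace Ω] (P : Measure Ω) (X Y : Ω → ℝ) (u v : ℝ) : ℝ :=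
  (P {ω | u < X ω ∧ v < Y ω}).toReal - (P {ω | u < X ω}).toReal * (P {ω | v < Y ω}).toReal


def g1 (s x y : ℝ) : ℝ := bivGaussDensity s x y * ((s * y - x) / (1 - s ^ 2))

def DD (s x y : ℝ) : ℝ :=
  bivGaussDensity s x y *
    ((s * (1 - s ^ 2) + x * y * (1 + s ^ 2) - s * (x ^ 2 + y ^ 2)) / (1 - s ^ 2) ^ 2)

def phi (x : ℝ) : ℝ := (Real.sqrt (2 * Real.pi))⁻¹ * Real.exp (-(x ^ 2) / 2)

lemma biv_pos {s : ℝ} (hs : s ^ 2 < 1) (x y : ℝ) : 0 < bivGaussDensity s x y := by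
  have h1 : (0:ℝ) < 1 - s ^ 2 := by linarith
  have h2 := Real.sqrt_pos.mpr h1
  have h3 := Real.pi_pos
  unfold bivGaussDensity; positivity

lemma exp_key {s x y : ℝ} (hs : s ^ 2 < 1) :
    Real.exp (-(x ^ 2 - 2 * s * x * y + y ^ 2) / (2 * (1 - s ^ 2))) ≤
      Real.exp (-(x ^ 2 + y ^ 2) / 4) := by
  have h1 : (0:ℝ) < 1 - s ^ 2 := by linarith
  apply Real.exp_le_exp.mpr
  rw [neg_div, neg_div, neg_le_neg_iff, div_le_div_iff₀ (by norm_num) (by positivity)]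
  nlinarith [sq_nonneg (x - s * y), sq_nonneg (s * x - y), sq_nonneg (x - y), sq_nonneg (x + y)]

lemma bound_f {r s x y : ℝ} (hr : r ^ 2 < 1) (hsr : s ^ 2 ≤ r ^ 2) :
    bivGaussDensity s x y ≤
      (2 * Real.pi * Real.sqrt (1 - r ^ 2))⁻¹ * Real.exp (-(x ^ 2 + y ^ 2) / 4) := by
  have hs : s ^ 2 < 1 := lt_of_le_of_lt hsr hr
  have h1 : (0:ℝ) < 1 - s ^ 2 := by linarith
  have h2 : (0:ℝ) < 1 - r ^ 2 := by linarith
  have hpi := Real.pi_pos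
  have hpre : (2 * Real.pi * Real.sqrt (1 - s ^ 2))⁻¹ ≤
      (2 * Real.pi * Real.sqrt (1 - r ^ 2))⁻¹ := by
    gcongr
  unfold bivGaussDensity
  have := exp_key (x := x) (y := y) hs
  have h3 := Real.sqrt_pos.mpr h1
  exact mul_le_mul hpre this (by positivity) (by positivity)

lemma poly_exp {t : ℝ} (ht : 0 ≤ t) : 1 + 2 * t ≤ 16 * Real.exp (t / 8) := by
  have := Real.add_one_le_exp (t / 8)
  nlinarith [Real.exp_pos (t / 8)]

lemma bound_DD {r s x y : ℝ} (hr : r ^ 2 < 1) (hsr : s ^ 2 ≤ r ^ 2) :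
    |DD s x y| ≤ (2 * Real.pi * Real.sqrt (1 - r ^ 2))⁻¹ * 16 / (1 - r ^ 2) ^ 2 *
      (Real.exp (-(x ^ 2) / 8) * Real.exp (-(y ^ 2) / 8)) := by
  have hs : s ^ 2 < 1 := lt_of_le_of_lt hsr hr
  have h1 : (0:ℝ) < 1 - s ^ 2 := by linarith
  have h2 : (0:ℝ) < 1 - r ^ 2 := by linarith
  have hpi := Real.pi_pos
  have hP := Real.sqrt_pos.mpr h2
  have hfpos := (biv_pos hs x y).le
  have habs : |s| ≤ 1 := abs_le.mpr ⟨by nlinarith, by nlinarith⟩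
  have hnum : |s * (1 - s ^ 2) + x * y * (1 + s ^ 2) - s * (x ^ 2 + y ^ 2)| ≤
      1 + 2 * (x ^ 2 + y ^ 2) := by
    rw [abs_le]
    constructor
    · nlinarith [sq_nonneg (x - y), sq_nonneg (x + y), abs_le.mp habs, sq_nonneg s,
        sq_nonneg (1 - s), sq_nonneg (1 + s)]
    · nlinarith [sq_nonneg (x - y), sq_nonneg (x + y), abs_le.mp habs, sq_nonneg s,
        sq_nonneg (1 - s), sq_nonneg (1 + s)]
  have step1 : |DD s x y| ≤
      ((2 * Real.pi * Real.sqrt (1 - r ^ 2))⁻¹ * Real.exp (-(x ^ 2 + y ^ 2) / 4)) *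
        ((1 + 2 * (x ^ 2 + y ^ 2)) / (1 - r ^ 2) ^ 2) := by
    unfold DD
    rw [abs_mul, abs_of_pos (biv_pos hs x y), abs_div]
    apply mul_le_mul (bound_f hr hsr)
    · rw [abs_of_pos (by positivity : (0:ℝ) < (1 - s ^ 2) ^ 2)]
      apply div_le_div₀ (by positivity) hnum (by positivity)
      nlinarith
    · positivity
    · positivity
  refine step1.trans ?_
  have step2 : (1 + 2 * (x ^ 2 + y ^ 2)) ≤ 16 * Real.exp ((x ^ 2 + y ^ 2) / 8) :=
    poly_exp (by positivity)
  calc ((2 * Real.pi * Real.sqrt (1 - r ^ 2))⁻¹ * Real.exp (-(x ^ 2 + y ^ 2) / 4)) *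
        ((1 + 2 * (x ^ 2 + y ^ 2)) / (1 - r ^ 2) ^ 2)
      ≤ ((2 * Real.pi * Real.sqrt (1 - r ^ 2))⁻¹ * Real.exp (-(x ^ 2 + y ^ 2) / 4)) *
        ((16 * Real.exp ((x ^ 2 + y ^ 2) / 8)) / (1 - r ^ 2) ^ 2) := by
        gcongr
    _ = (2 * Real.pi * Real.sqrt (1 - r ^ 2))⁻¹ * 16 / (1 - r ^ 2) ^ 2 *
        (Real.exp (-(x ^ 2 + y ^ 2) / 4) * Real.exp ((x ^ 2 + y ^ 2) / 8)) := by ring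
    _ = _ := by
        rw [← Real.exp_add, ← Real.exp_add]
        congr 1
        ring

lemma bound_g1 {r s x y : ℝ} (hr : r ^ 2 < 1) (hsr : s ^ 2 ≤ r ^ 2) :
    |g1 s x y| ≤ (2 * Real.pi * Real.sqrt (1 - r ^ 2))⁻¹ * 16 / (1 - r ^ 2) *
      (Real.exp (-(x ^ 2) / 8) * Real.exp (-(y ^ 2) / 8)) := by
  have hs : s ^ 2 < 1 := lt_of_le_of_lt hsr hr
  have h1 : (0:ℝ) < 1 - s ^ 2 := by linarith
  have h2 : (0:ℝ) < 1 - r ^ 2 := by linarith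
  have hpi := Real.pi_pos
  have hP := Real.sqrt_pos.mpr h2
  have habs : |s| ≤ 1 := abs_le.mpr ⟨by nlinarith, by nlinarith⟩
  have hnum : |s * y - x| ≤ 1 + 2 * (x ^ 2 + y ^ 2) := by
    rw [abs_le]
    constructor
    · nlinarith [sq_nonneg (x - 1), sq_nonneg (y - 1), sq_nonneg (y + 1), sq_nonneg (x + 1),
        abs_le.mp habs, sq_nonneg (s * y - y), sq_nonneg (s * y + y)]
    · nlinarith [sq_nonneg (x - 1), sq_nonneg (y - 1), sq_nonneg (y + 1), sq_nonneg (x + 1),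
        abs_le.mp habs, sq_nonneg (s * y - y), sq_nonneg (s * y + y)]
  have step1 : |g1 s x y| ≤
      ((2 * Real.pi * Real.sqrt (1 - r ^ 2))⁻¹ * Real.exp (-(x ^ 2 + y ^ 2) / 4)) *
        ((1 + 2 * (x ^ 2 + y ^ 2)) / (1 - r ^ 2)) := by
    unfold g1
    rw [abs_mul, abs_of_pos (biv_pos hs x y), abs_div]
    apply mul_le_mul (bound_f hr hsr)
    · rw [abs_of_pos h1]
      apply div_le_div₀ (by positivity) hnum h2
      linarith
    · positivity
    · positivity
  refine step1.trans ?_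
  calc ((2 * Real.pi * Real.sqrt (1 - r ^ 2))⁻¹ * Real.exp (-(x ^ 2 + y ^ 2) / 4)) *
        ((1 + 2 * (x ^ 2 + y ^ 2)) / (1 - r ^ 2))
      ≤ ((2 * Real.pi * Real.sqrt (1 - r ^ 2))⁻¹ * Real.exp (-(x ^ 2 + y ^ 2) / 4)) *
        ((16 * Real.exp ((x ^ 2 + y ^ 2) / 8)) / (1 - r ^ 2)) := by
        gcongr
        exact poly_exp (by positivity)
    _ = (2 * Real.pi * Real.sqrt (1 - r ^ 2))⁻¹ * 16 / (1 - r ^ 2) *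
        (Real.exp (-(x ^ 2 + y ^ 2) / 4) * Real.exp ((x ^ 2 + y ^ 2) / 8)) := by ring
    _ = _ := by
        rw [← Real.exp_add, ← Real.exp_add]
        congr 1
        ring

/-- derivative in `x` -/
lemma hasDerivAt_x {s : ℝ} (hs : s ^ 2 < 1) (x y : ℝ) :
    HasDerivAt (fun x => bivGaussDensity s x y) (g1 s x y) x := by
  have h1 : (0:ℝ) < 1 - s ^ 2 := by linarith
  have hq : HasDerivAt (fun x : ℝ => x ^ 2 - 2 * s * x * y + y ^ 2)
      ((2:ℕ) * x ^ 1 - 2 * s * 1 * y) x := by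
    have := ((hasDerivAt_pow 2 x).sub
      (((hasDerivAt_id x).const_mul (2 * s)).mul_const y)).add_const (y ^ 2)
    simpa using this
  have he : HasDerivAt (fun x : ℝ => -(x ^ 2 - 2 * s * x * y + y ^ 2) / (2 * (1 - s ^ 2)))
      ((-((2:ℕ) * x ^ 1 - 2 * s * 1 * y)) / (2 * (1 - s ^ 2))) x := hq.neg.div_const _
  have h := (he.exp.const_mul ((2 * Real.pi * Real.sqrt (1 - s ^ 2))⁻¹))
  refine h.congr_deriv (Eq.symm ?_)
  unfold g1 bivGaussDensity
  field_simp
  ring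

/-- derivative of `g1` in `y` -/
lemma hasDerivAt_y_g1 {s : ℝ} (hs : s ^ 2 < 1) (x y : ℝ) :
    HasDerivAt (fun y => g1 s x y) (DD s x y) y := by
  have h1 : (0:ℝ) < 1 - s ^ 2 := by linarith
  have hq : HasDerivAt (fun y : ℝ => x ^ 2 - 2 * s * x * y + y ^ 2)
      (0 - 2 * s * x * 1 + (2:ℕ) * y ^ 1) y := by
    have := ((hasDerivAt_const y (x ^ 2)).sub ((hasDerivAt_id y).const_mul (2 * s * x))).add
        (hasDerivAt_pow 2 y)
    exact this
  have he : HasDerivAt (fun y : ℝ => -(x ^ 2 - 2 * s * x * y + y ^ 2) / (2 * (1 - s ^ 2)))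
      ((-(0 - 2 * s * x * 1 + (2:ℕ) * y ^ 1)) / (2 * (1 - s ^ 2))) y := hq.neg.div_const _
  have hf : HasDerivAt (fun y => bivGaussDensity s x y)
      ((2 * Real.pi * Real.sqrt (1 - s ^ 2))⁻¹ *
        (Real.exp (-(x ^ 2 - 2 * s * x * y + y ^ 2) / (2 * (1 - s ^ 2))) *
          ((-(0 - 2 * s * x * 1 + (2:ℕ) * y ^ 1)) / (2 * (1 - s ^ 2))))) y :=
    he.exp.const_mul _
  have hl : HasDerivAt (fun y : ℝ => (s * y - x) / (1 - s ^ 2)) (s * 1 / (1 - s ^ 2)) y := by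
    exact (((hasDerivAt_id y).const_mul s).sub_const x).div_const _
  have h := hf.mul hl
  refine h.congr_deriv (Eq.symm ?_)
  unfold DD bivGaussDensity
  field_simp
  ring

lemma hasDerivAt_s {s : ℝ} (hs : s ^ 2 < 1) (x y : ℝ) :
    HasDerivAt (fun s => bivGaussDensity s x y) (DD s x y) s := by
  have h1 : (0:ℝ) < 1 - s ^ 2 := by linarith
  have hw : Real.sqrt (1 - s ^ 2) * Real.sqrt (1 - s ^ 2) = 1 - s ^ 2 :=
    Real.mul_self_sqrt h1.le
  have hwpos : 0 < Real.sqrt (1 - s ^ 2) := Real.sqrt_pos.mpr h1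
  have hpi := Real.pi_pos
  have ha : HasDerivAt (fun s : ℝ => 1 - s ^ 2) (-((2:ℕ) * s ^ 1)) s :=
    (hasDerivAt_pow 2 s).const_sub 1
  have hsq : HasDerivAt (fun s : ℝ => Real.sqrt (1 - s ^ 2))
      (-((2:ℕ) * s ^ 1) / (2 * Real.sqrt (1 - s ^ 2))) s := ha.sqrt (by positivity)
  have hc : HasDerivAt (fun s : ℝ => 2 * Real.pi * Real.sqrt (1 - s ^ 2))
      (2 * Real.pi * (-((2:ℕ) * s ^ 1) / (2 * Real.sqrt (1 - s ^ 2)))) s :=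
    hsq.const_mul _
  have hne : 2 * Real.pi * Real.sqrt (1 - s ^ 2) ≠ 0 := by positivity
  have hinv : HasDerivAt (fun s : ℝ => (2 * Real.pi * Real.sqrt (1 - s ^ 2))⁻¹)
      ((2 * Real.pi * Real.sqrt (1 - s ^ 2))⁻¹ * (s / (1 - s ^ 2))) s := by
    refine (hc.inv hne).congr_deriv (Eq.symm ?_)
    field_simp
    ring_nf
    rw [Real.sq_sqrt h1.le]
    ring
  -- numerator of exponent
  have hnum : HasDerivAt (fun s : ℝ => -(x ^ 2 - 2 * s * x * y + y ^ 2))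
      (-(0 - 2 * 1 * x * y + 0)) s := by
    have := (((((hasDerivAt_id s).const_mul 2).mul_const x).mul_const y).const_sub
      (x ^ 2)).add_const (y ^ 2)
    exact this.neg.congr_deriv (by ring)
  have hden : HasDerivAt (fun s : ℝ => 2 * (1 - s ^ 2)) (2 * -((2:ℕ) * s ^ 1)) s :=
    ha.const_mul 2
  have hdenne : 2 * (1 - s ^ 2) ≠ 0 := by positivity
  have hquot := hnum.div hden hdenne
  have h := hinv.mul hquot.exp
  refine h.congr_deriv (Eq.symm ?_)
  unfold DD bivGaussDensity
  simp only [Pi.div_apply]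
  field_simp
  ring

lemma integrable_exp8 : Integrable (fun t : ℝ => Real.exp (-(t ^ 2) / 8)) := by
  have h := integrable_exp_neg_mul_sq (show (0:ℝ) < 1/8 by norm_num)
  have : (fun t : ℝ => Real.exp (-(t ^ 2) / 8)) = fun t : ℝ => Real.exp (-(1/8) * t ^ 2) := by
    funext t; congr 1; ring
  rw [this]; exact h

lemma tendsto_exp8 (c : ℝ) :
    Tendsto (fun t : ℝ => c * Real.exp (-(t ^ 2) / 8)) atTop (𝓝 0) := by
  have h1 : Tendsto (fun t : ℝ => -(t ^ 2) / 8) atTop atBot := by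
    apply Tendsto.atBot_div_const (by norm_num)
    exact tendsto_neg_atBot_iff.mpr (tendsto_pow_atTop (by norm_num))
  have h2 := Real.tendsto_exp_atBot.comp h1
  simpa using h2.const_mul c

lemma tendsto_exp4 (c y : ℝ) :
    Tendsto (fun t : ℝ => c * Real.exp (-(t ^ 2 + y ^ 2) / 4)) atTop (𝓝 0) := by
  have h1 : Tendsto (fun t : ℝ => -(t ^ 2 + y ^ 2) / 4) atTop atBot := by
    apply Tendsto.atBot_div_const (by norm_num)
    apply tendsto_neg_atBot_iff.mpr
    exact (tendsto_pow_atTop (by norm_num)).atTop_add tendsto_const_nhds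
  have h2 := Real.tendsto_exp_atBot.comp h1
  simpa using h2.const_mul c

lemma tendsto_f_x {s : ℝ} (hs : s ^ 2 < 1) (y : ℝ) :
    Tendsto (fun x => bivGaussDensity s x y) atTop (𝓝 0) := by
  apply squeeze_zero_norm (a := fun x : ℝ =>
    (2 * Real.pi * Real.sqrt (1 - s ^ 2))⁻¹ * Real.exp (-(x ^ 2 + y ^ 2) / 4))
  · intro x
    rw [Real.norm_eq_abs, abs_of_pos (biv_pos hs x y)]
    exact bound_f hs le_rfl
  · exact tendsto_exp4 _ y

lemma tendsto_g1_y {s : ℝ} (hs : s ^ 2 < 1) (x : ℝ) :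
    Tendsto (fun y => g1 s x y) atTop (𝓝 0) := by
  apply squeeze_zero_norm (a := fun y : ℝ =>
    ((2 * Real.pi * Real.sqrt (1 - s ^ 2))⁻¹ * 16 / (1 - s ^ 2) *
      Real.exp (-(x ^ 2) / 8)) * Real.exp (-(y ^ 2) / 8))
  · intro y
    rw [Real.norm_eq_abs]
    calc |g1 s x y| ≤ (2 * Real.pi * Real.sqrt (1 - s ^ 2))⁻¹ * 16 / (1 - s ^ 2) *
        (Real.exp (-(x ^ 2) / 8) * Real.exp (-(y ^ 2) / 8)) := bound_g1 hs le_rfl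
      _ = _ := by ring
  · exact tendsto_exp8 _

lemma meas_DD_y (s x : ℝ) : Measurable (fun y => DD s x y) := by
  unfold DD bivGaussDensity; fun_prop

lemma meas_g1_x (s y : ℝ) : Measurable (fun x => g1 s x y) := by
  unfold g1 bivGaussDensity; fun_prop

lemma integrableOn_DD_y {s : ℝ} (hs : s ^ 2 < 1) (x v : ℝ) :
    IntegrableOn (fun y => DD s x y) (Ioi v) := by
  apply Integrable.integrableOn
  apply Integrable.mono' (g := fun y : ℝ =>
    ((2 * Real.pi * Real.sqrt (1 - s ^ 2))⁻¹ * 16 / (1 - s ^ 2) ^ 2 *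
      Real.exp (-(x ^ 2) / 8)) * Real.exp (-(y ^ 2) / 8))
    (integrable_exp8.const_mul _) (meas_DD_y s x).aestronglyMeasurable
  filter_upwards with y
  rw [Real.norm_eq_abs]
  calc |DD s x y| ≤ _ := bound_DD hs le_rfl
    _ = _ := by ring

lemma integrableOn_g1_x {s : ℝ} (hs : s ^ 2 < 1) (u y : ℝ) :
    IntegrableOn (fun x => g1 s x y) (Ioi u) := by
  apply Integrable.integrableOn
  apply Integrable.mono' (g := fun x : ℝ =>
    ((2 * Real.pi * Real.sqrt (1 - s ^ 2))⁻¹ * 16 / (1 - s ^ 2) *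
      Real.exp (-(y ^ 2) / 8)) * Real.exp (-(x ^ 2) / 8))
    (integrable_exp8.const_mul _) (meas_g1_x s y).aestronglyMeasurable
  filter_upwards with x
  rw [Real.norm_eq_abs]
  calc |g1 s x y| ≤ _ := bound_g1 hs le_rfl
    _ = _ := by ring

lemma integral_DD_y {s : ℝ} (hs : s ^ 2 < 1) (x v : ℝ) :
    ∫ y in Ioi v, DD s x y = -g1 s x v := by
  have := integral_Ioi_of_hasDerivAt_of_tendsto' (a := v)
    (fun y _ => hasDerivAt_y_g1 hs x y) (integrableOn_DD_y hs x v) (tendsto_g1_y hs x)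
  simpa using this

lemma integral_g1_x {s : ℝ} (hs : s ^ 2 < 1) (u v : ℝ) :
    ∫ x in Ioi u, g1 s x v = -bivGaussDensity s u v := by
  have := integral_Ioi_of_hasDerivAt_of_tendsto' (a := u)
    (fun x _ => hasDerivAt_x hs x v) (integrableOn_g1_x hs u v) (tendsto_f_x hs v)
  simpa using this

lemma sqrt_two_pi_mul {a : ℝ} (ha : 0 ≤ a) :
    Real.sqrt (2 * Real.pi) * Real.sqrt (2 * Real.pi * a) =
      2 * Real.pi * Real.sqrt a := by
  have hpi := Real.pi_pos
  rw [← Real.sqrt_mul (by positivity), show 2 * Real.pi * (2 * Real.pi * a) =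
    (2 * Real.pi) ^ 2 * a by ring, Real.sqrt_mul (by positivity), Real.sqrt_sq (by positivity)]

lemma factor {s : ℝ} (hs : s ^ 2 < 1) (x y : ℝ) :
    bivGaussDensity s x y =
      phi x * gaussianPDFReal (s * x) ⟨1 - s ^ 2, by linarith⟩ y := by
  have h1 : (0:ℝ) < 1 - s ^ 2 := by linarith
  have hpi := Real.pi_pos
  unfold bivGaussDensity phi gaussianPDFReal
  change _ = _ * ((√(2 * Real.pi * (1 - s ^ 2)))⁻¹ * Real.exp (-(y - s * x) ^ 2 / (2 * (1 - s ^ 2))))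
  rw [show Real.exp (-(x ^ 2 - 2 * s * x * y + y ^ 2) / (2 * (1 - s ^ 2))) =
    Real.exp (-(x ^ 2) / 2) * Real.exp (-(y - s * x) ^ 2 / (2 * (1 - s ^ 2))) from by
      rw [← Real.exp_add]; congr 1; field_simp; ring]
  rw [← sqrt_two_pi_mul h1.le, mul_inv]
  ring

lemma marginal_y {s : ℝ} (hs : s ^ 2 < 1) (x : ℝ) :
    ∫ y, bivGaussDensity s x y = phi x := by
  have h1 : (0:ℝ) < 1 - s ^ 2 := by linarith
  simp_rw [factor hs x]
  rw [integral_const_mul]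
  have hv : (⟨1 - s ^ 2, h1.le⟩ : NNReal) ≠ 0 :=
    fun h => h1.ne' (congrArg NNReal.toReal h)
  exact (congrArg (phi x * ·) (integral_gaussianPDFReal_eq_one (s * x) hv)).trans (mul_one _)

lemma biv_symm (s x y : ℝ) : bivGaussDensity s x y = bivGaussDensity s y x := by
  unfold bivGaussDensity; ring_nf

lemma f0 (x y : ℝ) : bivGaussDensity 0 x y = phi x * phi y := by
  have hpi := Real.pi_pos
  have h2 : Real.sqrt (2 * Real.pi) * Real.sqrt (2 * Real.pi) = 2 * Real.pi :=
    Real.mul_self_sqrt (by positivity)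
  unfold bivGaussDensity phi
  rw [show -(x ^ 2 - 2 * 0 * x * y + y ^ 2) / (2 * (1 - (0:ℝ) ^ 2)) =
      -(x ^ 2) / 2 + -(y ^ 2) / 2 by ring,
    show (1:ℝ) - 0 ^ 2 = 1 by norm_num, Real.sqrt_one, mul_one, Real.exp_add,
    show ((2:ℝ) * Real.pi)⁻¹ = (Real.sqrt (2 * Real.pi))⁻¹ * (Real.sqrt (2 * Real.pi))⁻¹ by
      rw [← mul_inv, h2]]
  ring

lemma bound_f8 {r s x y : ℝ} (hr : r ^ 2 < 1) (hsr : s ^ 2 ≤ r ^ 2) :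
    bivGaussDensity s x y ≤ (2 * Real.pi * Real.sqrt (1 - r ^ 2))⁻¹ *
      (Real.exp (-(x ^ 2) / 8) * Real.exp (-(y ^ 2) / 8)) := by
  have h2 : (0:ℝ) < 1 - r ^ 2 := by nlinarith
  have hpi := Real.pi_pos
  have hP := Real.sqrt_pos.mpr h2
  refine (bound_f hr hsr).trans ?_
  rw [← Real.exp_add, show -(x ^ 2) / 8 + -(y ^ 2) / 8 = -(x ^ 2 + y ^ 2) / 8 by ring]
  have : Real.exp (-(x ^ 2 + y ^ 2) / 4) ≤ Real.exp (-(x ^ 2 + y ^ 2) / 8) :=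
    Real.exp_le_exp.mpr (by nlinarith [sq_nonneg x, sq_nonneg y])
  exact mul_le_mul_of_nonneg_left this (by positivity)

lemma integrable_biv {s : ℝ} (hs : s ^ 2 < 1) :
    Integrable (fun p : ℝ × ℝ => bivGaussDensity s p.1 p.2) := by
  have h8 : Integrable (fun p : ℝ × ℝ =>
      (2 * Real.pi * Real.sqrt (1 - s ^ 2))⁻¹ *
        (Real.exp (-(p.1 ^ 2) / 8) * Real.exp (-(p.2 ^ 2) / 8))) := by
    rw [Measure.volume_eq_prod]
    exact ((integrable_exp8.mul_prod integrable_exp8).const_mul _)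
  apply Integrable.mono' h8
  · apply Measurable.aestronglyMeasurable
    unfold bivGaussDensity; fun_prop
  · filter_upwards with p
    rw [Real.norm_eq_abs, abs_of_pos (biv_pos hs p.1 p.2)]
    exact bound_f8 hs le_rfl

lemma integrableOn_f_y {s : ℝ} (hs : s ^ 2 < 1) (x v : ℝ) :
    IntegrableOn (fun y => bivGaussDensity s x y) (Ioi v) := by
  apply Integrable.integrableOn
  apply Integrable.mono' (g := fun y : ℝ =>
    ((2 * Real.pi * Real.sqrt (1 - s ^ 2))⁻¹ * Real.exp (-(x ^ 2) / 8)) *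
      Real.exp (-(y ^ 2) / 8)) (integrable_exp8.const_mul _)
  · apply Measurable.aestronglyMeasurable
    unfold bivGaussDensity; fun_prop
  · filter_upwards with y
    rw [Real.norm_eq_abs, abs_of_pos (biv_pos hs x y)]
    calc bivGaussDensity s x y ≤ _ := bound_f8 hs le_rfl
      _ = _ := by ring

lemma integrableOn_marg {s : ℝ} (hs : s ^ 2 < 1) (u v : ℝ) :
    IntegrableOn (fun x => ∫ y in Ioi v, bivGaussDensity s x y) (Ioi u) := by
  set K := (2 * Real.pi * Real.sqrt (1 - s ^ 2))⁻¹ with hK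
  set I8 := ∫ y in Ioi v, Real.exp (-(y ^ 2) / 8) with hI8
  apply Integrable.integrableOn
  apply Integrable.mono' (g := fun x : ℝ => (K * I8) * Real.exp (-(x ^ 2) / 8))
    (integrable_exp8.const_mul _)
  · apply StronglyMeasurable.aestronglyMeasurable
    apply StronglyMeasurable.integral_prod_right' (f := fun p : ℝ × ℝ => bivGaussDensity s p.1 p.2)
    apply Continuous.stronglyMeasurable
    unfold bivGaussDensity; fun_prop
  · filter_upwards with x
    calc ‖∫ y in Ioi v, bivGaussDensity s x y‖
        ≤ ∫ y in Ioi v, ‖bivGaussDensity s x y‖ := norm_integral_le_integral_norm _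
      _ ≤ ∫ y in Ioi v, (K * Real.exp (-(x ^ 2) / 8)) * Real.exp (-(y ^ 2) / 8) := by
          apply integral_mono ((integrableOn_f_y hs x v).norm)
            ((integrable_exp8.const_mul _).restrict)
          intro y
          dsimp only
          rw [Real.norm_eq_abs, abs_of_pos (biv_pos hs x y)]
          calc bivGaussDensity s x y ≤ _ := bound_f8 hs le_rfl
            _ = _ := by ring
      _ = (K * I8) * Real.exp (-(x ^ 2) / 8) := by
          rw [integral_const_mul]; ring

section core

variable {r : ℝ}

lemma finIoc (a b : ℝ) : IsFiniteMeasure (volume.restrict (Ioc a b)) :=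
  ⟨by simpa using measure_Ioc_lt_top⟩

/-- FTC in the correlation parameter. -/

lemma ftc_s (hr : r ^ 2 < 1) (x y : ℝ) :
    bivGaussDensity r x y - bivGaussDensity 0 x y = ∫ s in (0:ℝ)..r, DD s x y := by
  have habs : ∀ s ∈ uIcc (0:ℝ) r, s ^ 2 ≤ r ^ 2 := by
    intro s hs
    rcases le_total (0:ℝ) r with h | h
    · rw [uIcc_of_le h] at hs; nlinarith [hs.1, hs.2]
    · rw [uIcc_of_ge h] at hs; nlinarith [hs.1, hs.2]
  symm
  apply intervalIntegral.integral_eq_sub_of_hasDerivAt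
  · exact fun s hs => hasDerivAt_s (lt_of_le_of_lt (habs s hs) hr) x y
  · rw [intervalIntegrable_iff]
    apply Integrable.mono' (g := fun _ : ℝ =>
      (2 * Real.pi * Real.sqrt (1 - r ^ 2))⁻¹ * 16 / (1 - r ^ 2) ^ 2 *
        (Real.exp (-(x ^ 2) / 8) * Real.exp (-(y ^ 2) / 8)))
    · haveI := finIoc (min 0 r) (max 0 r)
      exact (integrable_const (β := ℝ) _ :
        Integrable _ (volume.restrict (Ioc (min 0 r) (max 0 r))))
    · apply Measurable.aestronglyMeasurable
      unfold DD bivGaussDensity; fun_prop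
    · filter_upwards [ae_restrict_mem measurableSet_uIoc] with s hs
      rw [Real.norm_eq_abs]
      exact bound_DD hr (habs s (uIoc_subset_uIcc hs))

lemma core (hr : r ^ 2 < 1) {a b : ℝ} (hsq : ∀ s ∈ Ioc a b, s ^ 2 ≤ r ^ 2) (u v : ℝ) :
    ∫ x in Ioi u, ∫ y in Ioi v, ∫ s in Ioc a b, DD s x y =
      ∫ s in Ioc a b, bivGaussDensity s u v := by
  haveI := finIoc a b
  have hC : (0:ℝ) < 1 - r ^ 2 := by nlinarith
  -- swap 1 (pointwise in x)
  have swap1 : ∀ x : ℝ, ∫ y in Ioi v, ∫ s in Ioc a b, DD s x y =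
      ∫ s in Ioc a b, ∫ y in Ioi v, DD s x y := by
    intro x
    apply integral_integral_swap (f := fun y s => DD s x y)
    rw [Function.uncurry_def]
    apply Integrable.mono' (g := fun p : ℝ × ℝ =>
      (((2 * Real.pi * Real.sqrt (1 - r ^ 2))⁻¹ * 16 / (1 - r ^ 2) ^ 2 *
        Real.exp (-(x ^ 2) / 8)) * Real.exp (-(p.1 ^ 2) / 8)) * (1:ℝ))
    · exact (integrable_exp8.const_mul _).restrict.mul_prod (integrable_const (1:ℝ))
    · apply Measurable.aestronglyMeasurable
      unfold DD bivGaussDensity; fun_prop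
    · rw [Measure.prod_restrict]
      filter_upwards [ae_restrict_mem ((measurableSet_Ioi).prod measurableSet_Ioc)] with p hp
      rw [Real.norm_eq_abs]
      calc |DD p.2 x p.1| ≤ _ := bound_DD hr (hsq p.2 hp.2)
        _ = _ := by ring
  have step1 : ∫ x in Ioi u, ∫ y in Ioi v, ∫ s in Ioc a b, DD s x y =
      ∫ x in Ioi u, ∫ s in Ioc a b, -g1 s x v := by
    apply setIntegral_congr_fun measurableSet_Ioi
    intro x _
    dsimp only
    rw [swap1 x]
    apply setIntegral_congr_fun measurableSet_Ioc
    intro s hs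
    exact integral_DD_y (lt_of_le_of_lt (hsq s hs) hr) x v
  rw [step1]
  -- swap 2
  have swap2 : ∫ x in Ioi u, ∫ s in Ioc a b, -g1 s x v =
      ∫ s in Ioc a b, ∫ x in Ioi u, -g1 s x v := by
    apply integral_integral_swap (f := fun x s => -g1 s x v)
    rw [Function.uncurry_def]
    apply Integrable.mono' (g := fun p : ℝ × ℝ =>
      (((2 * Real.pi * Real.sqrt (1 - r ^ 2))⁻¹ * 16 / (1 - r ^ 2) *
        Real.exp (-(v ^ 2) / 8)) * Real.exp (-(p.1 ^ 2) / 8)) * (1:ℝ))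
    · exact (integrable_exp8.const_mul _).restrict.mul_prod (integrable_const (1:ℝ))
    · apply Measurable.aestronglyMeasurable
      unfold g1 bivGaussDensity; fun_prop
    · rw [Measure.prod_restrict]
      filter_upwards [ae_restrict_mem ((measurableSet_Ioi).prod measurableSet_Ioc)] with p hp
      rw [Real.norm_eq_abs, abs_neg]
      calc |g1 p.2 p.1 v| ≤ _ := bound_g1 hr (hsq p.2 hp.2)
        _ = _ := by ring
  rw [swap2]
  apply setIntegral_congr_fun measurableSet_Ioc
  intro s hs
  dsimp only
  rw [integral_neg, integral_g1_x (lt_of_le_of_lt (hsq s hs) hr) u v, neg_neg]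

lemma main_calc (hr : r ^ 2 < 1) (u v : ℝ) :
    ∫ x in Ioi u, ∫ y in Ioi v, (bivGaussDensity r x y - bivGaussDensity 0 x y) =
      ∫ s in (0:ℝ)..r, bivGaussDensity s u v := by
  have h1 : ∫ x in Ioi u, ∫ y in Ioi v, (bivGaussDensity r x y - bivGaussDensity 0 x y) =
      ∫ x in Ioi u, ∫ y in Ioi v, ∫ s in (0:ℝ)..r, DD s x y := by
    simp_rw [ftc_s hr]
  rw [h1]
  rcases le_total (0:ℝ) r with h | h
  · have hsq : ∀ s ∈ Ioc (0:ℝ) r, s ^ 2 ≤ r ^ 2 := fun s hs => by nlinarith [hs.1, hs.2]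
    simp_rw [intervalIntegral.integral_of_le h]
    exact core hr hsq u v
  · have hsq : ∀ s ∈ Ioc r (0:ℝ), s ^ 2 ≤ r ^ 2 := fun s hs => by nlinarith [hs.1, hs.2]
    simp_rw [intervalIntegral.integral_of_ge h, integral_neg]
    exact neg_inj.mpr (core hr hsq u v)

end core

lemma phi_eq (x : ℝ) : phi x = gaussianPDFReal 0 1 x := by
  unfold phi gaussianPDFReal
  norm_num

lemma integral_phi : ∫ x, phi x = 1 := by
  simp_rw [phi_eq]
  exact integral_gaussianPDFReal_eq_one 0 one_ne_zero

/-- For a bivariate standard Gaussian pair `(Z₁, Z₂)` with correlation `r`,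
`Cov(1{Z₁>u}, 1{Z₂>v}) = (2π)⁻¹ ∫_0^r (1-s²)^{-1/2} exp(-(u²-2suv+v²)/(2(1-s²))) ds`,
the integral being oriented. -/
theorem covInd_gaussian_formula {Ω : Type*} [MeasurableSpace Ω]
    (P : Measure Ω) [IsProbabilityMeasure P]
    (r : ℝ) (hr : r ∈ Set.Ioo (-1 : ℝ) 1)
    (Z₁ Z₂ : Ω → ℝ) (hZ : IsBivStdGaussian P Z₁ Z₂ r) (u v : ℝ) :
    covInd P Z₁ Z₂ u v =
      (2 * Real.pi)⁻¹ * ∫ s in (0 : ℝ)..r,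
        (Real.sqrt (1 - s ^ 2))⁻¹ *
          Real.exp (-(u ^ 2 - 2 * s * u * v + v ^ 2) / (2 * (1 - s ^ 2))) := by
  obtain ⟨hrl, hru⟩ := hr
  have hr2 : r ^ 2 < 1 := by nlinarith
  have h02 : (0:ℝ) ^ 2 < 1 := by norm_num
  have hnn : ∀ p : ℝ × ℝ, 0 ≤ bivGaussDensity r p.1 p.2 := fun p => (biv_pos hr2 _ _).le
  rw [IsBivStdGaussian] at hZ
  -- total integral is 1
  have htotal : ∫ p : ℝ × ℝ, bivGaussDensity r p.1 p.2 = 1 := by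
    rw [Measure.volume_eq_prod ℝ ℝ,
      integral_prod _ ((Measure.volume_eq_prod ℝ ℝ) ▸ integrable_biv hr2)]
    simp_rw [marginal_y hr2]
    exact integral_phi
  have hlint : ∫⁻ p : ℝ × ℝ, ENNReal.ofReal (bivGaussDensity r p.1 p.2) = 1 := by
    rw [← ofReal_integral_eq_lintegral_ofReal (integrable_biv hr2) (ae_of_all _ hnn), htotal,
      ENNReal.ofReal_one]
  -- the pair map is a.e.-measurable
  have hmap : AEMeasurable (fun ω => (Z₁ ω, Z₂ ω)) P := by
    by_contra h
    rw [Measure.map_of_not_aemeasurable h] at hZ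
    have h0 := congrArg (fun μ : Measure (ℝ × ℝ) => μ univ) hZ
    simp only [Measure.coe_zero, Pi.zero_apply] at h0
    rw [withDensity_apply _ MeasurableSet.univ, Measure.restrict_univ, hlint] at h0
    exact one_ne_zero h0.symm
  -- measure of preimages
  have hPA : ∀ A : Set (ℝ × ℝ), MeasurableSet A →
      (P ((fun ω => (Z₁ ω, Z₂ ω)) ⁻¹' A)).toReal = ∫ p in A, bivGaussDensity r p.1 p.2 := by
    intro A hA
    rw [← Measure.map_apply_of_aemeasurable hmap hA, hZ, withDensity_apply _ hA,
      ← ofReal_integral_eq_lintegral_ofReal ((integrable_biv hr2).integrableOn)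
        (ae_of_all _ fun p => (biv_pos hr2 _ _).le),
      ENNReal.toReal_ofReal (integral_nonneg fun p => (biv_pos hr2 _ _).le)]
  have hs1 : {ω | u < Z₁ ω ∧ v < Z₂ ω} = (fun ω => (Z₁ ω, Z₂ ω)) ⁻¹' (Ioi u ×ˢ Ioi v) := by
    ext ω; simp
  have hs2 : {ω | u < Z₁ ω} = (fun ω => (Z₁ ω, Z₂ ω)) ⁻¹' (Ioi u ×ˢ univ) := by
    ext ω; simp
  have hs3 : {ω | v < Z₂ ω} = (fun ω => (Z₁ ω, Z₂ ω)) ⁻¹' ((univ : Set ℝ) ×ˢ Ioi v) := by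
    ext ω; simp
  have E1 : (P {ω | u < Z₁ ω ∧ v < Z₂ ω}).toReal =
      ∫ x in Ioi u, ∫ y in Ioi v, bivGaussDensity r x y := by
    rw [hs1, hPA _ (measurableSet_Ioi.prod measurableSet_Ioi), Measure.volume_eq_prod ℝ ℝ]
    exact setIntegral_prod _
      ((Measure.volume_eq_prod ℝ ℝ) ▸ (integrable_biv hr2).integrableOn)
  have E2 : (P {ω | u < Z₁ ω}).toReal = ∫ x in Ioi u, phi x := by
    rw [hs2, hPA _ (measurableSet_Ioi.prod MeasurableSet.univ), Measure.volume_eq_prod ℝ ℝ,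
      setIntegral_prod _ ((Measure.volume_eq_prod ℝ ℝ) ▸ (integrable_biv hr2).integrableOn)]
    rw [Measure.restrict_univ]
    exact setIntegral_congr_fun measurableSet_Ioi fun x _ => marginal_y hr2 x
  have E3 : (P {ω | v < Z₂ ω}).toReal = ∫ y in Ioi v, phi y := by
    rw [hs3, hPA _ (MeasurableSet.univ.prod measurableSet_Ioi), Measure.volume_eq_prod ℝ ℝ,
      setIntegral_prod _ ((Measure.volume_eq_prod ℝ ℝ) ▸ (integrable_biv hr2).integrableOn)]
    rw [Measure.restrict_univ]
    rw [integral_integral_swap (f := fun x y => bivGaussDensity r x y) (by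
      rw [show (volume : Measure ℝ).prod (volume.restrict (Ioi v)) =
          ((volume : Measure ℝ).restrict univ).prod (volume.restrict (Ioi v)) by
            rw [Measure.restrict_univ], Measure.prod_restrict]
      exact ((Measure.volume_eq_prod ℝ ℝ) ▸ (integrable_biv hr2)).integrableOn)]
    apply setIntegral_congr_fun measurableSet_Ioi
    intro y _
    dsimp only
    rw [show (fun x => bivGaussDensity r x y) = fun x => bivGaussDensity r y x from
      funext fun x => biv_symm r x y]
    exact marginal_y hr2 y
  have E4 : (∫ x in Ioi u, phi x) * (∫ y in Ioi v, phi y) =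
      ∫ x in Ioi u, ∫ y in Ioi v, bivGaussDensity 0 x y := by
    symm
    calc ∫ x in Ioi u, ∫ y in Ioi v, bivGaussDensity 0 x y
        = ∫ x in Ioi u, phi x * ∫ y in Ioi v, phi y := by
          simp_rw [f0, integral_const_mul]
      _ = _ := integral_mul_const _ _
  have hsplit : (∫ x in Ioi u, ∫ y in Ioi v, bivGaussDensity r x y) -
      (∫ x in Ioi u, ∫ y in Ioi v, bivGaussDensity 0 x y) =
      ∫ x in Ioi u, ∫ y in Ioi v, (bivGaussDensity r x y - bivGaussDensity 0 x y) := by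
    rw [← integral_sub (integrableOn_marg hr2 u v) (integrableOn_marg h02 u v)]
    apply setIntegral_congr_fun measurableSet_Ioi
    intro x _
    dsimp only
    rw [← integral_sub (integrableOn_f_y hr2 x v) (integrableOn_f_y h02 x v)]
  have hfinal : ∫ s in (0:ℝ)..r, bivGaussDensity s u v =
      (2 * Real.pi)⁻¹ * ∫ s in (0 : ℝ)..r,
        (Real.sqrt (1 - s ^ 2))⁻¹ *
          Real.exp (-(u ^ 2 - 2 * s * u * v + v ^ 2) / (2 * (1 - s ^ 2))) := by
    rw [← intervalIntegral.integral_const_mul]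
    apply intervalIntegral.integral_congr
    intro s _
    dsimp only
    unfold bivGaussDensity
    rw [show ((2:ℝ) * Real.pi * Real.sqrt (1 - s ^ 2))⁻¹ =
      2⁻¹ * Real.pi⁻¹ * (Real.sqrt (1 - s ^ 2))⁻¹ by rw [mul_inv, mul_inv]]
    ring
  unfold covInd
  rw [E1, E2, E3, E4, hsplit, main_calc hr2 u v, hfinal]

end
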